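/- Let p be a prime, k a field of characteristic p, L a finite group, and M a module over the group algebra k[L] that is both simple and projective. Then every normal p-subgroup of L is trivial. -/

import Mathlib

open MonoidAlgebra

section Aux

lemma aux_psmul {p : ℕ} [Fact p.Prime] {k : Type*} [Field k] [CharP k p]
    {L : Type*} [Group L]
    {M : Type*} [AddCommGroup M] [Module (MonoidAlgebra k L) M] (x : M) : p • x = 0 := by
  haveI : CharP (MonoidAlgebra k L) p :=
    charP_of_injective_algebraMap (algebraMap k (MonoidAlgebra k L)).injective p
  rw [← Nat.cast_smul_eq_nsmul (MonoidAlgebra k L), CharP.cast_eq_zero, zero_smul]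

variable {p : ℕ} [Fact p.Prime] {k : Type*} [Field k] [CharP k p]
  {L : Type*} [Group L]
  {M : Type*} [AddCommGroup M] [Module (MonoidAlgebra k L) M]

lemma aux_exists_fixed [Finite L] (Q : Subgroup L) (hQp : IsPGroup p Q) {m : M} (hm : m ≠ 0) :
    ∃ m₀ : M, m₀ ≠ 0 ∧ ∀ q : Q, single (q : L) (1 : k) • m₀ = m₀ := by
  classical
  haveI : Module (ZMod p) M := AddCommGroup.zmodModule (fun x => aux_psmul (p := p) (k := k) (L := L) x)
  set S : Submodule (ZMod p) M :=
    Submodule.span (ZMod p) (Set.range fun q : Q => single (q : L) (1 : k) • m) with hS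
  have hmS : m ∈ S := by
    apply Submodule.subset_span
    refine ⟨1, ?_⟩
    show single ((1 : Q) : L) (1 : k) • m = m
    rw [show ((1 : Q) : L) = (1 : L) from rfl, ← MonoidAlgebra.one_def, one_smul]
  have hclosed : ∀ (q : Q) (x : M), x ∈ S → single (q : L) (1 : k) • x ∈ S := by
    intro q x hx
    induction hx using Submodule.span_induction with
    | mem y hy =>
      obtain ⟨q', rfl⟩ := hy
      rw [smul_smul, single_mul_single, one_mul]
      exact Submodule.subset_span ⟨q * q', rfl⟩
    | zero => rw [smul_zero]; exact Submodule.zero_mem S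
    | add y z _ _ hy hz => rw [smul_add]; exact Submodule.add_mem S hy hz
    | smul c y _ hy =>
      have hc : c • y = c.val • y := by
        rw [← Nat.cast_smul_eq_nsmul (ZMod p), ZMod.natCast_val, ZMod.cast_id]
      have hcomm := AddMonoidHom.map_nsmul
        (smulAddHom (MonoidAlgebra k L) M (single (q : L) (1 : k))) c.val y
      simp only [smulAddHom_apply] at hcomm
      rw [hc, hcomm]
      exact nsmul_mem hy _
  haveI : Module.Finite (ZMod p) S := Module.Finite.span_of_finite _ (Set.finite_range _)
  haveI : Finite S := Module.finite_of_finite (ZMod p)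
  letI act : MulAction Q S :=
    { smul := fun q x => ⟨single (q : L) (1 : k) • (x : M), hclosed q x x.2⟩
      one_smul := fun x => Subtype.ext (by
        change single ((1 : Q) : L) (1 : k) • (x : M) = x
        rw [show ((1 : Q) : L) = (1 : L) from rfl, ← MonoidAlgebra.one_def, one_smul])
      mul_smul := fun q₁ q₂ x => Subtype.ext (by
        change single ((q₁ * q₂ : Q) : L) (1 : k) • (x : M)
          = single (q₁ : L) 1 • (single (q₂ : L) 1 • (x : M))
        rw [smul_smul, single_mul_single, one_mul, Subgroup.coe_mul]) }
  have h0 : (0 : S) ∈ MulAction.fixedPoints Q S := fun q => Subtype.ext (smul_zero _)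
  have hdvd : p ∣ Nat.card S := by
    have h1 : addOrderOf (⟨m, hmS⟩ : S) ∣ p := by
      rw [addOrderOf_dvd_iff_nsmul_eq_zero]
      exact Subtype.ext (aux_psmul (p := p) (k := k) (L := L) m)
    rcases (Fact.out : p.Prime).eq_one_or_self_of_dvd _ h1 with h | h
    · have h0' : (⟨m, hmS⟩ : S) = 0 := AddMonoid.addOrderOf_eq_one_iff.mp h
      exact absurd (congrArg Subtype.val h0') hm
    · have hd := addOrderOf_dvd_natCard (⟨m, hmS⟩ : S)
      rwa [h] at hd
  obtain ⟨b, hbfix, hb0⟩ := hQp.exists_fixed_point_of_prime_dvd_card_of_fixed_point S hdvd h0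
  refine ⟨(b : M), fun h => hb0 (Subtype.ext (by simp [h])), fun q => ?_⟩
  exact congrArg Subtype.val (MulAction.mem_fixedPoints.mp hbfix q)

lemma aux_theta (Q : Subgroup L) [Fintype Q]
    (hfix : ∀ (q : Q) (y : M), single (q : L) (1 : k) • y = y)
    (x : M) (a : MonoidAlgebra k L)
    (ha : (∑ q : Q, single (q : L) (1 : k)) * a = 0) : a • x = 0 := by
  classical
  set e : L → L := fun g => (Quotient.mk (QuotientGroup.rightRel Q) g).out with he
  have he_mem : ∀ g : L, e g * g⁻¹ ∈ Q := by
    intro g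
    have h : (QuotientGroup.rightRel Q) (e g) g := Quotient.mk_out g
    have h' := QuotientGroup.rightRel_apply.mp h
    have := Q.inv_mem h'
    rwa [mul_inv_rev, inv_inv] at this
  have he_coset : ∀ (q : Q) (g : L), e ((q : L) * g) = e g := by
    intro q g
    have : (Quotient.mk (QuotientGroup.rightRel Q) ((q : L) * g))
        = Quotient.mk (QuotientGroup.rightRel Q) g := by
      apply Quotient.sound
      refine QuotientGroup.rightRel_apply.mpr ?_
      have : g * ((q : L) * g)⁻¹ = (q : L)⁻¹ := by group
      rw [this]
      exact Q.inv_mem q.2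
    simp only [he, this]
  set Θ : MonoidAlgebra k L →+ M := (Finsupp.liftAddHom (fun g =>
    if g = e g then ((smulAddHom (MonoidAlgebra k L) M).flip x).comp (MonoidAlgebra.singleAddHom g)
    else 0)).comp MonoidAlgebra.coeffAddEquiv.toAddMonoidHom with hΘ
  have hθ_single : ∀ (g : L) (c : k),
      Θ (single g c) = if g = e g then single g c • x else 0 := by
    intro g c
    rw [hΘ]
    erw [Finsupp.liftAddHom_apply_single]
    split_ifs with h
    · rfl
    · rfl
  have key : ∀ b : MonoidAlgebra k L, Θ ((∑ q : Q, single (q : L) (1 : k)) * b) = b • x := by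
    intro b
    induction b using MonoidAlgebra.induction_linear with
    | zero => rw [mul_zero, map_zero, zero_smul]
    | add f g hf hg => rw [mul_add, map_add, hf, hg, add_smul]
    | single g c =>
      rw [Finset.sum_mul]
      have hsm : ∀ q : Q, single (q : L) (1 : k) * single g c = single ((q : L) * g) c := by
        intro q; rw [single_mul_single, one_mul]
      simp only [hsm]
      rw [map_sum]
      have hterm : ∀ q : Q, Θ (single ((q : L) * g) c)
          = if q = (⟨e g * g⁻¹, he_mem g⟩ : Q) then single g c • x else 0 := by
        intro q
        rw [hθ_single, he_coset q g]
        have hval : single ((q : L) * g) c • x = single g c • x := by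
          have h : single ((q : L) * g) c = single (q : L) (1 : k) * single g c := by
            rw [single_mul_single, one_mul]
          rw [h, mul_smul, hfix]
        by_cases hq : q = (⟨e g * g⁻¹, he_mem g⟩ : Q)
        · have hc : (q : L) * g = e g := by
            rw [hq]; show e g * g⁻¹ * g = e g; group
          rw [if_pos hc, if_pos hq, hval]
        · have hc : ¬((q : L) * g = e g) := by
            intro h
            apply hq
            exact Subtype.ext (show (q : L) = e g * g⁻¹ by rw [← h]; group)
          rw [if_neg hc, if_neg hq]
      simp only [hterm]
      rw [Finset.sum_ite_eq' Finset.univ (⟨e g * g⁻¹, he_mem g⟩ : Q)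
        (fun _ => single g c • x)]
      simp
  have := key a
  rw [ha, map_zero] at this
  exact this.symm

end Aux

/-- if the group algebra `k[L]` of a finite group `L` over a field `k` of
characteristic `p` has a module that is both simple and projective, then every normal
`p`-subgroup of `L` is trivial. -/
theorem normal_pSubgroup_trivial_of_simple_projective
    (p : ℕ) [Fact p.Prime] (k : Type*) [Field k] [CharP k p]
    (L : Type*) [Group L] [Finite L]
    (M : Type*) [AddCommGroup M] [Module (MonoidAlgebra k L) M]
    (hsimple : IsSimpleModule (MonoidAlgebra k L) M)
    (hproj : Module.Projective (MonoidAlgebra k L) M) :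
    ∀ Q : Subgroup L, Q.Normal → IsPGroup p Q → Q = ⊥ := by
  intro Q hQN hQp
  by_contra hQne
  classical
  haveI : Fintype Q := Fintype.ofFinite Q
  haveI : Nontrivial M := IsSimpleModule.nontrivial (MonoidAlgebra k L) M
  obtain ⟨m, hm⟩ := exists_ne (0 : M)
  obtain ⟨m₀, hm₀, hfix₀⟩ := aux_exists_fixed (k := k) Q hQp hm
  -- the fixed-point submodule
  let N : Submodule (MonoidAlgebra k L) M :=
    { carrier := {y | ∀ q : Q, single (q : L) (1 : k) • y = y}
      zero_mem' := fun q => smul_zero _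
      add_mem' := fun {y} {z} hy hz q => by rw [smul_add, hy q, hz q]
      smul_mem' := by
        intro a y hy
        induction a using MonoidAlgebra.induction_linear with
        | zero => intro q; rw [zero_smul, smul_zero]
        | add f g hf hg => intro q; rw [add_smul, smul_add, hf q, hg q]
        | single g c =>
          intro q
          have hq' : (g⁻¹ * (q : L) * g) ∈ Q := by
            have := hQN.conj_mem (q : L) q.2 g⁻¹
            rwa [inv_inv] at this
          have : single (q : L) (1 : k) * single g c
              = single g c * single (g⁻¹ * (q : L) * g) (1 : k) := by
            rw [single_mul_single, single_mul_single, one_mul, mul_one]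
            congr 1
            group
          rw [smul_smul, this, ← smul_smul, hy ⟨g⁻¹ * (q : L) * g, hq'⟩] }
  have hNne : N ≠ ⊥ := by
    intro h
    have : m₀ ∈ N := fun q => hfix₀ q
    rw [h, Submodule.mem_bot] at this
    exact hm₀ this
  have hNtop : N = ⊤ := (hsimple.1.2 N).resolve_left hNne
  have hfix : ∀ (q : Q) (y : M), single (q : L) (1 : k) • y = y := by
    intro q y
    have : y ∈ N := hNtop ▸ Submodule.mem_top
    exact this q
  -- the sum over Q kills every element of M
  have hsz : ∀ y : M, (∑ q : Q, single (q : L) (1 : k)) • y = 0 := by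
    intro y
    rw [Finset.sum_smul]
    have : ∀ q ∈ Finset.univ, single ((q : Q) : L) (1 : k) • y = y := fun q _ => hfix q y
    rw [Finset.sum_congr rfl this, Finset.sum_const, Finset.card_univ]
    haveI : Nontrivial Q := (Subgroup.nontrivial_iff_ne_bot Q).mpr hQne
    obtain ⟨n, hn0, hn⟩ := (hQp.nontrivial_iff_card).mp inferInstance
    rw [← Nat.card_eq_fintype_card, hn]
    obtain ⟨n', rfl⟩ := Nat.exists_eq_succ_of_ne_zero hn0.ne'
    rw [pow_succ, mul_nsmul, aux_psmul (p := p) (k := k) (L := L)]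
  -- projectivity
  obtain ⟨σ, hσ⟩ := (Module.projective_def).mp hproj
  have h1 : (∑ q : Q, single (q : L) (1 : k)) • σ m₀ = 0 := by
    rw [← map_smul, hsz, map_zero]
  have h2 : ∀ i : M, (∑ q : Q, single (q : L) (1 : k)) * (σ m₀ i) = 0 := by
    intro i
    have := congrArg (fun f : M →₀ MonoidAlgebra k L => f i) h1
    simpa [Finsupp.smul_apply, smul_eq_mul] using this
  have h3 := hσ m₀
  rw [Finsupp.linearCombination_apply] at h3
  have h4 : ((σ m₀).sum fun i a => a • (id i : M)) = 0 := by
    refine Finset.sum_eq_zero fun i _ => ?_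
    exact aux_theta Q hfix i _ (h2 i)
  rw [h4] at h3
  exact hm₀ h3.symm
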